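/- Let M > 0, d ≥ 1, and let φ be a probability density on ℝ^d satisfying (H_S) and (H_Lip) on [−M,M]^d. Then there exist constants 0 < κ̲ < κ̄ < ∞ such that for all μ, μ̃ ∈ ℝ^d with μ − μ̃ ∈ [−M,M]^d: κ̲ ‖μ − μ̃‖² ≤ ‖φ_μ − φ_{μ̃}‖₂² ≤ κ̄ ‖μ − μ̃‖². -/

import Mathlib

open MeasureTheory ENNReal

noncomputable section

/-- `ℝ^d` with the Euclidean norm. -/
abbrev Eu (d : ℕ) := EuclideanSpace ℝ (Fin d)

/-- `φ` is a probability density on `ℝ^d`. -/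
def IsDensity {d : ℕ} (φ : Eu d → ℝ) : Prop :=
  Measurable φ ∧ (∀ x, 0 ≤ φ x) ∧ ∫ x, φ x = 1

/-- The two-component contamination mixture density `f_{λ,μ} = (1-λ)φ + λφ(·-μ)`. -/
def mix {d : ℕ} (φ : Eu d → ℝ) (l : ℝ) (μ : Eu d) : Eu d → ℝ :=
  fun x => (1 - l) * φ x + l * φ (x - μ)

/-- Assumption (H_S): `φ` is `C³` and belongs to `L²(ℝ^d)`. -/
def HS {d : ℕ} (φ : Eu d → ℝ) : Prop :=
  ContDiff ℝ 3 φ ∧ MemLp φ 2 volume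

/-- Assumption (H_Lip) on `[-M,M]^d`: there is `g ∈ L²` with
`|φ(x) - φ(x-μ)| ≤ ‖μ‖ g(x)` for all `x` and all `μ ∈ [-M,M]^d`, and
`∫ g²/φ < ∞`. -/
def HLipOn {d : ℕ} (φ : Eu d → ℝ) (M : ℝ) : Prop :=
  ∃ g : Eu d → ℝ, MemLp g 2 volume ∧
    (∀ (x μ : Eu d), (∀ j, |μ j| ≤ M) → |φ x - φ (x - μ)| ≤ ‖μ‖ * g x) ∧
    Integrable (fun x => (g x) ^ 2 / φ x)

open Filter Metric Topology Asymptotics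

/-- A continuous nonnegative integrable function with a nonzero period has integral `≠ 1`. -/
lemma periodic_contradiction {d : ℕ} {φ : Eu d → ℝ} (hc : Continuous φ)
    (hpos : ∀ x, 0 ≤ φ x) (hint : Integrable φ) (h1 : ∫ x, φ x = 1)
    {ν : Eu d} (hν : ν ≠ 0) (hp : ∀ x, φ (x - ν) = φ x) : False := by
  obtain ⟨x0, hx0⟩ : ∃ x0, 0 < φ x0 := by
    by_contra h
    push_neg at h
    have hz : φ = fun _ => 0 := funext fun x => le_antisymm (h x) (hpos x)
    rw [hz] at h1
    simp at h1
  have hνn : 0 < ‖ν‖ := norm_pos_iff.2 hν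
  have hev : ∀ᶠ x in 𝓝 x0, φ x0 / 2 < φ x :=
    (hc.tendsto x0).eventually (eventually_gt_nhds (by linarith))
  obtain ⟨ε, hε, hball⟩ := Metric.eventually_nhds_iff.1 hev
  set ρ : ℝ := min (ε / 2) (‖ν‖ / 3) with hρdef
  have hρ : 0 < ρ := lt_min (by linarith) (by positivity)
  have hρε : ρ < ε := lt_of_le_of_lt (min_le_left _ _) (by linarith)
  have hρν : 2 * ρ < ‖ν‖ := by
    have h := min_le_right (ε / 2) (‖ν‖ / 3)
    have : ρ ≤ ‖ν‖ / 3 := h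
    linarith
  have hper : ∀ n : ℕ, ∀ x, φ (x - (n : ℝ) • ν) = φ x := by
    intro n
    induction n with
    | zero => intro x; simp
    | succ n ih =>
      intro x
      have hx : x - ((n + 1 : ℕ) : ℝ) • ν = (x - ν) - (n : ℝ) • ν := by
        push_cast; module
      rw [hx, ih (x - ν), hp x]
  set c : ℝ := φ x0 / 2 with hcdef
  have hc0 : 0 < c := by positivity
  set B : ℕ → Set (Eu d) := fun n => Metric.closedBall (x0 + (n : ℝ) • ν) ρ with hBdef
  have hvol : ∀ n, volume (B n) = volume (Metric.closedBall x0 ρ) := by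
    intro n
    rw [hBdef]
    rw [Measure.addHaar_closedBall volume _ hρ.le, Measure.addHaar_closedBall volume _ hρ.le]
  have hvfin : volume (Metric.closedBall x0 ρ) ≠ ⊤ := measure_closedBall_lt_top.ne
  set v : ℝ := (volume (Metric.closedBall x0 ρ)).toReal with hvdef
  have hv : 0 < v := ENNReal.toReal_pos (measure_closedBall_pos volume x0 hρ).ne' hvfin
  have hlower : ∀ n : ℕ, c * v ≤ ∫ x in B n, φ x := by
    intro n
    have hbd : ∀ x ∈ B n, c ≤ φ x := by
      intro x hx
      have hd : dist (x - (n : ℝ) • ν) x0 < ε := by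
        have heq : dist (x - (n : ℝ) • ν) x0 = dist x (x0 + (n : ℝ) • ν) := by
          rw [dist_eq_norm, dist_eq_norm]
          congr 1
          abel
        rw [heq]
        exact lt_of_le_of_lt (Metric.mem_closedBall.1 hx) hρε
      have h2 := hball hd
      rw [hper n x] at h2
      exact h2.le
    have h := setIntegral_ge_of_const_le (s := B n) measurableSet_closedBall
      (by rw [hvol n]; exact hvfin) hbd hint.integrableOn
    calc c * v = c * (volume (B n)).toReal := by rw [hvol n]
    _ ≤ ∫ x in B n, φ x := by rw [smul_eq_mul, mul_comm] at h; exact h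
  have hdisj : ∀ m n : ℕ, m ≠ n → Disjoint (B m) (B n) := by
    intro m n hmn
    apply Metric.closedBall_disjoint_closedBall
    have h1' : dist (x0 + (m : ℝ) • ν) (x0 + (n : ℝ) • ν) = |(m : ℝ) - n| * ‖ν‖ := by
      rw [dist_eq_norm]
      have h : (x0 + (m : ℝ) • ν) - (x0 + (n : ℝ) • ν) = ((m : ℝ) - n) • ν := by module
      rw [h, norm_smul, Real.norm_eq_abs]
    have h2' : (1 : ℝ) ≤ |(m : ℝ) - n| := by
      have hne : ((m : ℤ) - n) ≠ 0 := sub_ne_zero.2 (by exact_mod_cast hmn)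
      have h := Int.one_le_abs hne
      calc (1 : ℝ) ≤ |((m : ℤ) - n : ℤ)| := by exact_mod_cast h
      _ = |(m : ℝ) - n| := by push_cast; rfl
    rw [h1']
    nlinarith
  have hsum : ∀ N : ℕ, (N : ℝ) * (c * v) ≤ 1 := by
    intro N
    have heq := integral_biUnion_finset (Finset.range N) (μ := volume) (f := φ)
      (fun n _ => measurableSet_closedBall)
      (fun m _ n _ hmn => hdisj m n hmn) (fun n _ => hint.integrableOn)
    have hle : ∫ x in ⋃ n ∈ Finset.range N, B n, φ x ≤ ∫ x, φ x :=
      setIntegral_le_integral hint (Filter.Eventually.of_forall hpos)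
    calc (N : ℝ) * (c * v) = ∑ _n ∈ Finset.range N, c * v := by
          rw [Finset.sum_const, Finset.card_range, nsmul_eq_mul]
    _ ≤ ∑ n ∈ Finset.range N, ∫ x in B n, φ x := Finset.sum_le_sum fun n _ => hlower n
    _ = ∫ x in ⋃ n ∈ Finset.range N, B n, φ x := heq.symm
    _ ≤ 1 := by rwa [h1] at hle
  obtain ⟨N, hN⟩ := exists_nat_gt (1 / (c * v))
  have hcv : 0 < c * v := mul_pos hc0 hv
  have hgt : (1 : ℝ) < N * (c * v) := by
    rw [div_lt_iff₀ hcv] at hN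
    linarith
  linarith [hsum N]

lemma sq_diff_integrable {d : ℕ} {φ : Eu d → ℝ} (hφ2 : MemLp φ 2 volume) (ν : Eu d) :
    Integrable (fun x => (φ x - φ (x - ν)) ^ 2) := by
  have h := (hφ2.sub
    (hφ2.comp_measurePreserving (measurePreserving_sub_right volume ν))).integrable_sq
  simpa using h

/-- Fatou-type lemma: if nonnegative integrable functions converge pointwise to a
continuous function and their integrals tend to `0`, the limit is identically `0`. -/
lemma fatou_zero {d : ℕ} (q : ℕ → Eu d → ℝ) (L : Eu d → ℝ)
    (hqm : ∀ j, Measurable (q j)) (hnn : ∀ j x, 0 ≤ q j x)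
    (hqi : ∀ j, Integrable (q j))
    (hlim : ∀ x, Tendsto (fun j => q j x) atTop (𝓝 (L x)))
    (hto0 : Tendsto (fun j => ∫ x, q j x) atTop (𝓝 0))
    (hLc : Continuous L) : ∀ x, L x = 0 := by
  have h1 : ∀ j, ∫⁻ x, ENNReal.ofReal (q j x) = ENNReal.ofReal (∫ x, q j x) := fun j =>
    (ofReal_integral_eq_lintegral_ofReal (hqi j) (Filter.Eventually.of_forall (hnn j))).symm
  have h2 : Tendsto (fun j => ∫⁻ x, ENNReal.ofReal (q j x)) atTop (𝓝 0) := by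
    have h := ENNReal.tendsto_ofReal hto0
    rw [ENNReal.ofReal_zero] at h
    simpa [h1] using h
  have h3 := lintegral_liminf_le (μ := volume) (u := atTop)
    (fun j => ENNReal.measurable_ofReal.comp (hqm j))
  simp only [Function.comp_apply, Function.comp] at h3
  rw [h2.liminf_eq] at h3
  have h4 : ∀ x, liminf (fun j => ENNReal.ofReal (q j x)) atTop = ENNReal.ofReal (L x) :=
    fun x => (ENNReal.tendsto_ofReal (hlim x)).liminf_eq
  simp_rw [h4] at h3
  have h6 : ∫⁻ x, ENNReal.ofReal (L x) = 0 := le_antisymm h3 zero_le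
  have h7 : (fun x => ENNReal.ofReal (L x)) =ᵐ[volume] 0 :=
    (lintegral_eq_zero_iff (ENNReal.measurable_ofReal.comp hLc.measurable)).1 h6
  have hLnn : ∀ x, 0 ≤ L x := fun x =>
    ge_of_tendsto' (hlim x) (fun j => hnn j x)
  have h8 : L =ᵐ[volume] (fun _ => 0) := by
    filter_upwards [h7] with x hx
    have : ENNReal.ofReal (L x) = 0 := hx
    rw [ENNReal.ofReal_eq_zero] at this
    linarith [hLnn x]
  have h9 : L = fun _ => 0 := (Continuous.ae_eq_iff_eq volume hLc continuous_const).1 h8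
  exact fun x => congrFun h9 x

/-- Key lower bound: a uniform quadratic lower bound on `‖φ - φ(· - ν)‖₂²` over the box. -/
lemma key_lower {d : ℕ} (M : ℝ) (hM : 0 < M) (φ : Eu d → ℝ)
    (hden : IsDensity φ) (hHS : HS φ) :
    ∃ κ : ℝ, 0 < κ ∧ ∀ ν : Eu d, (∀ j, |ν j| ≤ M) →
      κ * ‖ν‖ ^ 2 ≤ ∫ x, (φ x - φ (x - ν)) ^ 2 := by
  obtain ⟨hφm, hpos, h1⟩ := hden
  have hcont := hHS.1.continuous
  have hdiff : Differentiable ℝ φ := hHS.1.differentiable (by norm_num)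
  have hφ2 := hHS.2
  have hint : Integrable φ := by
    by_contra h
    rw [integral_undef h] at h1
    norm_num at h1
  set S : Set (Eu d) := {ν | ∀ j, |ν j| ≤ M} with hSdef
  set R : ℝ := Real.sqrt d * M with hRdef
  have hSb : ∀ ν ∈ S, ‖ν‖ ≤ R := by
    intro ν hν
    have h2 : ‖ν‖ = Real.sqrt (∑ j, ν j ^ 2) := by
      simp [EuclideanSpace.norm_eq, Real.norm_eq_abs, sq_abs]
    rw [h2, hRdef]
    have hsum : ∑ j, ν j ^ 2 ≤ (d : ℝ) * M ^ 2 := by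
      calc ∑ j, ν j ^ 2 ≤ ∑ _j : Fin d, M ^ 2 := Finset.sum_le_sum (fun j _ => by
            have h := hν j
            nlinarith [abs_nonneg (ν j), sq_abs (ν j)])
      _ = (d : ℝ) * M ^ 2 := by simp [Finset.sum_const, nsmul_eq_mul]
    calc Real.sqrt (∑ j, ν j ^ 2) ≤ Real.sqrt ((d : ℝ) * M ^ 2) := Real.sqrt_le_sqrt hsum
    _ = Real.sqrt d * M := by
        rw [Real.sqrt_mul (Nat.cast_nonneg d), Real.sqrt_sq hM.le]
  have hScl : IsClosed S := by
    have h : S = ⋂ j, {ν : Eu d | |ν j| ≤ M} := by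
      ext ν; simp [hSdef, Set.mem_iInter]
    rw [h]
    exact isClosed_iInter fun j =>
      isClosed_le (continuous_abs.comp (EuclideanSpace.proj j).continuous) continuous_const
  have hScomp : IsCompact S := by
    refine (isCompact_closedBall (0 : Eu d) R).of_isClosed_subset hScl ?_
    intro ν hν
    rw [Metric.mem_closedBall, dist_zero_right]
    exact hSb ν hν
  by_contra hcon
  push_neg at hcon
  have hseq : ∀ k : ℕ, ∃ ν : Eu d, ν ∈ S ∧
      (∫ x, (φ x - φ (x - ν)) ^ 2) < (1 / ((k : ℝ) + 1)) * ‖ν‖ ^ 2 := by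
    intro k
    obtain ⟨ν, hν1, hν2⟩ := hcon (1 / ((k : ℝ) + 1)) (by positivity)
    exact ⟨ν, hν1, hν2⟩
  choose u huS hulow using hseq
  have hFnn : ∀ ν : Eu d, 0 ≤ ∫ x, (φ x - φ (x - ν)) ^ 2 :=
    fun ν => integral_nonneg fun x => sq_nonneg _
  have hune : ∀ k, u k ≠ 0 := by
    intro k h0
    have h := hulow k
    rw [h0] at h
    simp only [norm_zero] at h
    have := hFnn (0 : Eu d)
    nlinarith
  obtain ⟨w, hwS, σ, hσ, hσtend⟩ := hScomp.tendsto_subseq huS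
  have hqm : ∀ ν : Eu d, Measurable fun x => (φ x - φ (x - ν)) ^ 2 := by
    intro ν
    exact ((hφm.sub (hφm.comp (measurable_id.sub_const ν))).pow_const 2)
  by_cases hz : w = 0
  · -- w = 0 : rescale and use differentiability
    set t : ℕ → ℝ := fun j => ‖u (σ j)‖ with htdef
    have ht : ∀ j, 0 < t j := fun j => norm_pos_iff.2 (hune (σ j))
    set e : ℕ → Eu d := fun j => (t j)⁻¹ • u (σ j) with hedef
    have he : ∀ j, e j ∈ Metric.sphere (0 : Eu d) 1 := by
      intro j
      rw [mem_sphere_zero_iff_norm, hedef]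
      rw [norm_smul, Real.norm_eq_abs, abs_inv, abs_of_pos (ht j)]
      exact inv_mul_cancel₀ (ht j).ne'
    obtain ⟨es, hes, τ, hτ, hτtend⟩ := (isCompact_sphere (0 : Eu d) 1).tendsto_subseq he
    have hes1 : ‖es‖ = 1 := mem_sphere_zero_iff_norm.1 hes
    have hesne : es ≠ 0 := by
      intro h
      rw [h, norm_zero] at hes1
      norm_num at hes1
    rw [hz] at hσtend
    have hν0 : Tendsto (fun j => u (σ (τ j))) atTop (𝓝 0) :=
      hσtend.comp hτ.tendsto_atTop
    set q : ℕ → Eu d → ℝ :=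
      fun j x => ((φ x - φ (x - u (σ (τ j)))) / t (τ j)) ^ 2 with hqdef
    have hqeq : ∀ j, q j = fun x => ((t (τ j)) ^ 2)⁻¹ * (φ x - φ (x - u (σ (τ j)))) ^ 2 := by
      intro j
      funext x
      show ((φ x - φ (x - u (σ (τ j)))) / t (τ j)) ^ 2 = _
      rw [div_pow, div_eq_inv_mul]
    have hqint : ∀ j, ∫ x, q j x = ((t (τ j)) ^ 2)⁻¹ * ∫ x, (φ x - φ (x - u (σ (τ j)))) ^ 2 := by
      intro j
      rw [hqeq j]
      exact integral_const_mul _ _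
    have hfatou := fatou_zero q (fun x => (fderiv ℝ φ x es) ^ 2)
      (fun j => by rw [hqeq j]; exact (hqm _).const_mul _)
      (fun j x => sq_nonneg _)
      (fun j => by
        rw [hqeq j]
        exact (sq_diff_integrable hφ2 _).const_mul _)
      (fun x => by
        -- pointwise convergence of difference quotients
        have hL : HasFDerivAt φ (fderiv ℝ φ x) x := (hdiff x).hasFDerivAt
        have hlo := (hasFDerivAt_iff_isLittleO_nhds_zero.1 hL).norm_right
        have hν0n : Tendsto (fun j => -u (σ (τ j))) atTop (𝓝 0) := by
          simpa using hν0.neg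
        have hcomp := hlo.comp_tendsto hν0n
        have hdiv := hcomp.tendsto_div_nhds_zero
        have hdiv' : Tendsto (fun j =>
            (φ (x - u (σ (τ j))) - φ x + fderiv ℝ φ x (u (σ (τ j)))) / t (τ j)) atTop (𝓝 0) := by
          refine hdiv.congr fun j => ?_
          simp [sub_eq_add_neg, map_neg, norm_neg, htdef]
        have hLe : Tendsto (fun j => fderiv ℝ φ x (e (τ j))) atTop (𝓝 (fderiv ℝ φ x es)) :=
          ((fderiv ℝ φ x).continuous.tendsto es).comp hτtend
        have hid : ∀ j, (φ x - φ (x - u (σ (τ j)))) / t (τ j)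
            = fderiv ℝ φ x (e (τ j))
              - (φ (x - u (σ (τ j))) - φ x + fderiv ℝ φ x (u (σ (τ j)))) / t (τ j) := by
          intro j
          have ht' : t (τ j) ≠ 0 := (ht (τ j)).ne'
          simp only [hedef, ContinuousLinearMap.map_smul, smul_eq_mul]
          field_simp
          try ring
        have hmain : Tendsto (fun j => (φ x - φ (x - u (σ (τ j)))) / t (τ j)) atTop
            (𝓝 (fderiv ℝ φ x es)) := by
          simp_rw [hid]
          simpa using hLe.sub hdiv'
        simpa [hqdef] using hmain.pow 2)
      (by
        -- integrals tend to 0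
        have hb : ∀ j, ∫ x, q j x ≤ 1 / ((j : ℝ) + 1) := by
          intro j
          rw [hqint j]
          have hlt := hulow (σ (τ j))
          have htj : ‖u (σ (τ j))‖ = t (τ j) := rfl
          rw [htj] at hlt
          have ht2 : (0 : ℝ) < (t (τ j)) ^ 2 := pow_pos (ht (τ j)) 2
          rw [inv_mul_le_iff₀ ht2]
          calc ∫ x, (φ x - φ (x - u (σ (τ j)))) ^ 2
                ≤ 1 / ((σ (τ j) : ℝ) + 1) * t (τ j) ^ 2 := hlt.le
            _ ≤ 1 / ((j : ℝ) + 1) * t (τ j) ^ 2 := by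
                have hji : (j : ℝ) + 1 ≤ (σ (τ j) : ℝ) + 1 := by
                  have : j ≤ σ (τ j) := le_trans hτ.le_apply hσ.le_apply
                  exact_mod_cast Nat.succ_le_succ this
                have := one_div_le_one_div_of_le (by positivity : (0:ℝ) < (j : ℝ) + 1) hji
                nlinarith [sq_nonneg (t (τ j))]
            _ = t (τ j) ^ 2 * (1 / ((j : ℝ) + 1)) := by ring
        have hnn' : ∀ j, 0 ≤ ∫ x, q j x :=
          fun j => integral_nonneg fun x => sq_nonneg _
        refine tendsto_of_tendsto_of_tendsto_of_le_of_le tendsto_const_nhds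
          tendsto_one_div_add_atTop_nhds_zero_nat hnn' hb)
      (((hHS.1.continuous_fderiv (by norm_num)).clm_apply continuous_const).pow 2)
    have hder0 : ∀ x, fderiv ℝ φ x es = 0 := by
      intro x
      have h := hfatou x
      exact pow_eq_zero_iff (by norm_num : (2:ℕ) ≠ 0) |>.mp h
    have hp : ∀ x, φ (x - es) = φ x := by
      intro x
      have hd : ∀ s : ℝ, HasDerivAt (fun s : ℝ => φ (x + s • es)) 0 s := by
        intro s
        have h1' : HasDerivAt (fun s : ℝ => x + s • es) es s := by
          simpa using ((hasDerivAt_id s).smul_const es).const_add x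
        have h2' := ((hdiff (x + s • es)).hasFDerivAt).comp_hasDerivAt s h1'
        rwa [hder0 (x + s • es)] at h2'
      have h := is_const_of_deriv_eq_zero (fun s => (hd s).differentiableAt)
        (fun s => (hd s).deriv) (-1) 0
      simpa [sub_eq_add_neg] using h
    exact absurd hp (fun hp => periodic_contradiction hcont hpos hint h1 hesne hp)
  · -- w ≠ 0 : direct Fatou
    set q : ℕ → Eu d → ℝ := fun j x => (φ x - φ (x - u (σ j))) ^ 2 with hqdef
    have hfatou := fatou_zero q (fun x => (φ x - φ (x - w)) ^ 2)
      (fun j => hqm _)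
      (fun j x => sq_nonneg _)
      (fun j => sq_diff_integrable hφ2 _)
      (fun x => by
        have h1' : Tendsto (fun j => x - u (σ j)) atTop (𝓝 (x - w)) :=
          tendsto_const_nhds.sub hσtend
        have h2' : Tendsto (fun j => φ (x - u (σ j))) atTop (𝓝 (φ (x - w))) :=
          (hcont.tendsto _).comp h1'
        exact (tendsto_const_nhds.sub h2').pow 2)
      (by
        have hb : ∀ j, ∫ x, q j x ≤ 1 / ((j : ℝ) + 1) * R ^ 2 := by
          intro j
          have hlt := (hulow (σ j)).le
          have hRj : ‖u (σ j)‖ ≤ R := hSb _ (huS (σ j))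
          have hR0 : (0 : ℝ) ≤ R := le_trans (norm_nonneg _) hRj
          calc ∫ x, q j x ≤ 1 / ((σ j : ℝ) + 1) * ‖u (σ j)‖ ^ 2 := hlt
          _ ≤ 1 / ((j : ℝ) + 1) * R ^ 2 := by
              have hji : (j : ℝ) + 1 ≤ (σ j : ℝ) + 1 := by
                exact_mod_cast Nat.succ_le_succ hσ.le_apply
              have hd1 := one_div_le_one_div_of_le (by positivity : (0:ℝ) < (j : ℝ) + 1) hji
              have hsq : ‖u (σ j)‖ ^ 2 ≤ R ^ 2 := by nlinarith [norm_nonneg (u (σ j))]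
              have h0' : (0:ℝ) ≤ 1 / ((j : ℝ) + 1) := by positivity
              exact mul_le_mul hd1 hsq (sq_nonneg _) h0'
        have hnn' : ∀ j, 0 ≤ ∫ x, q j x :=
          fun j => integral_nonneg fun x => sq_nonneg _
        have hRlim : Tendsto (fun j : ℕ => 1 / ((j : ℝ) + 1) * R ^ 2) atTop (𝓝 0) := by
          simpa using tendsto_one_div_add_atTop_nhds_zero_nat.mul_const (R ^ 2)
        exact tendsto_of_tendsto_of_tendsto_of_le_of_le tendsto_const_nhds hRlim hnn' hb)
      ((hcont.sub (hcont.comp (continuous_id.sub continuous_const))).pow 2)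
    have hp : ∀ x, φ (x - w) = φ x := by
      intro x
      have h := hfatou x
      have h' := pow_eq_zero_iff (by norm_num : (2:ℕ) ≠ 0) |>.mp h
      linarith [sub_eq_zero.1 h']
    exact periodic_contradiction hcont hpos hint h1 hz hp

/-- Two-sided comparison between `‖φ_μ - φ_μ̃‖₂²` and `‖μ - μ̃‖²`. -/
theorem shift_l2_comparison (d : ℕ) (hd : 1 ≤ d) (M : ℝ) (hM : 0 < M)
    (φ : Eu d → ℝ) (hden : IsDensity φ) (hHS : HS φ) (hHL : HLipOn φ M) :
    ∃ κlow κhigh : ℝ, 0 < κlow ∧ κlow < κhigh ∧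
      ∀ μ μ' : Eu d, (∀ j, |μ j - μ' j| ≤ M) →
        κlow * ‖μ - μ'‖ ^ 2 ≤ (∫ x, (φ (x - μ) - φ (x - μ')) ^ 2) ∧
        (∫ x, (φ (x - μ) - φ (x - μ')) ^ 2) ≤ κhigh * ‖μ - μ'‖ ^ 2 := by
  obtain ⟨g, hg2, hgLip, _⟩ := hHL
  have hIg : Integrable (fun x => g x ^ 2) := hg2.integrable_sq
  set G : ℝ := ∫ x, g x ^ 2 with hGdef
  have hG0 : 0 ≤ G := integral_nonneg fun x => sq_nonneg _
  obtain ⟨κ, hκ, hlow⟩ := key_lower M hM φ hden hHS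
  have hφ2 := hHS.2
  have hshift : ∀ μ μ' : Eu d,
      ∫ x, (φ (x - μ) - φ (x - μ')) ^ 2 = ∫ x, (φ x - φ (x - (μ' - μ))) ^ 2 := by
    intro μ μ'
    have h := integral_add_right_eq_self (μ := (volume : Measure (Eu d))) (fun x => (φ (x - μ) - φ (x - μ')) ^ 2) μ
    rw [← h]
    congr 1
    funext x
    have e1 : x + μ - μ = x := by abel
    have e2 : x + μ - μ' = x - (μ' - μ) := by abel
    rw [e1, e2]
  refine ⟨κ, G + κ + 1, hκ, by linarith, ?_⟩
  intro μ μ' hbox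
  set ν : Eu d := μ' - μ with hνdef
  have hboxν : ∀ j, |ν j| ≤ M := by
    intro j
    have hj : ν j = μ' j - μ j := by simp [hνdef]
    rw [hj, abs_sub_comm]
    exact hbox j
  have hnorm : ‖μ - μ'‖ = ‖ν‖ := by rw [hνdef, norm_sub_rev]
  rw [hshift μ μ', hnorm]
  constructor
  · exact hlow ν hboxν
  · calc ∫ x, (φ x - φ (x - ν)) ^ 2
        ≤ ∫ x, (‖ν‖ * g x) ^ 2 := by
          refine integral_mono (sq_diff_integrable hφ2 ν) ?_ ?_
          · simpa [mul_pow] using hIg.const_mul (‖ν‖ ^ 2)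
          · intro x
            calc (φ x - φ (x - ν)) ^ 2 = |φ x - φ (x - ν)| ^ 2 := (sq_abs _).symm
            _ ≤ (‖ν‖ * g x) ^ 2 := pow_le_pow_left₀ (abs_nonneg _) (hgLip x ν hboxν) 2
    _ = ‖ν‖ ^ 2 * G := by
        simp_rw [mul_pow]
        exact integral_const_mul _ _
    _ ≤ (G + κ + 1) * ‖ν‖ ^ 2 := by nlinarith [sq_nonneg ‖ν‖, hκ]
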